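/- Let ξ ∈ S^{d-1} and let K(ξ) := { a ⊙ ξ := (1/2)(a ⊗ ξ + ξ ⊗ a) : a ∈ C^d } ⊂ C^{d×d}_sym be the set of symmetric tensor products with ξ. If M ∈ R^{d×d}_sym cannot be written as c(a ⊙ b) for any a, b ∈ R^d and c ∈ R, then span_C{M} ∩ K(ξ) = {0} for all ξ ∈ S^{d-1}. If M = c(a ⊙ b) with a, b ∈ S^{d-1} and c ≠ 0, then span_C{M} ∩ K(ξ) ≠ {0} if and only if ξ = ±a or ξ = ±b. -/

import Mathlib

/-- Symmetric tensor product `a ⊙ b = (1/2)(a bᵀ + b aᵀ)`. -/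
noncomputable def symProd {d : ℕ} {R : Type*} [Field R] (a b : Fin d → R) :
    Matrix (Fin d) (Fin d) R :=
  Matrix.of fun i j => (a i * b j + b i * a j) / 2

lemma key13 {d : ℕ} (u v : Fin d → ℝ) (h : ∀ i j, u i * v j + u j * v i = 0) :
    (∀ i, u i = 0) ∨ (∀ i, v i = 0) := by
  by_cases hu : ∀ i, u i = 0
  · exact Or.inl hu
  · push_neg at hu
    obtain ⟨i, hi⟩ := hu
    right
    have hvi : v i = 0 := by
      have h1 := h i i
      have : u i * v i = 0 := by linarith
      exact (mul_eq_zero.mp this).resolve_left hi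
    intro j
    have h2 := h i j
    rw [hvi] at h2
    have : u i * v j = 0 := by linarith
    exact (mul_eq_zero.mp this).resolve_left hi

lemma core13 {d : ℕ} (a b ξ : Fin d → ℝ) (w : Fin d → ℂ) (μ : ℂ) (hμ : μ ≠ 0)
    (ha : ∑ i, a i * a i = 1) (hb : ∑ i, b i * b i = 1) (hS : ∑ i, ξ i * ξ i = 1)
    (h : ∀ i j, w i * (ξ j : ℂ) + w j * (ξ i : ℂ)
        = μ * ((a i : ℂ) * (b j : ℂ) + (a j : ℂ) * (b i : ℂ))) :
    (∀ i, ξ i = a i) ∨ (∀ i, ξ i = -a i) ∨ (∀ i, ξ i = b i) ∨ (∀ i, ξ i = -b i) := by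
  set α : ℝ := ∑ i, a i * ξ i with hα
  set β : ℝ := ∑ i, b i * ξ i with hβ
  set γ : ℂ := ∑ i, w i * (ξ i : ℂ) with hγ
  have hSc : ∑ i, (ξ i : ℂ) * (ξ i : ℂ) = 1 := by
    norm_cast
  have hαc : ∑ i, (a i : ℂ) * (ξ i : ℂ) = (α : ℂ) := by
    push_cast [hα]; norm_cast
  have hβc : ∑ i, (b i : ℂ) * (ξ i : ℂ) = (β : ℂ) := by
    push_cast [hβ]; norm_cast
  have hw : ∀ i, w i + γ * (ξ i : ℂ) = μ * ((β : ℂ) * a i + (α : ℂ) * b i) := by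
    intro i
    calc w i + γ * (ξ i : ℂ)
        = w i * (∑ j, (ξ j : ℂ) * (ξ j : ℂ)) + (∑ j, w j * (ξ j : ℂ)) * ξ i := by
          rw [hSc, ← hγ]; ring
      _ = ∑ j, (w i * (ξ j : ℂ) + w j * (ξ i : ℂ)) * ξ j := by
          rw [Finset.mul_sum, Finset.sum_mul, ← Finset.sum_add_distrib]
          exact Finset.sum_congr rfl fun j _ => by ring
      _ = ∑ j, (μ * ((a i : ℂ) * (b j : ℂ) + (a j : ℂ) * (b i : ℂ))) * ξ j :=
          Finset.sum_congr rfl fun j _ => by rw [h i j]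
      _ = μ * ((a i : ℂ) * (∑ j, (b j : ℂ) * ξ j) + (∑ j, (a j : ℂ) * ξ j) * (b i : ℂ)) := by
          rw [Finset.mul_sum, Finset.sum_mul, ← Finset.sum_add_distrib, Finset.mul_sum]
          exact Finset.sum_congr rfl fun j _ => by ring
      _ = μ * ((β : ℂ) * a i + (α : ℂ) * b i) := by rw [hβc, hαc]; ring
  have hγval : γ = μ * (α : ℂ) * (β : ℂ) := by
    have e : ∑ i, (w i + γ * (ξ i : ℂ)) * ξ i
        = ∑ i, (μ * ((β : ℂ) * a i + (α : ℂ) * b i)) * ξ i :=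
      Finset.sum_congr rfl fun i _ => by rw [hw i]
    have l : ∑ i, (w i + γ * (ξ i : ℂ)) * ξ i = γ + γ := by
      have t : ∀ i : Fin d, (w i + γ * (ξ i : ℂ)) * ξ i
          = w i * (ξ i : ℂ) + γ * ((ξ i : ℂ) * (ξ i : ℂ)) := fun i => by ring
      rw [Finset.sum_congr rfl fun i _ => t i, Finset.sum_add_distrib, ← hγ,
        ← Finset.mul_sum, hSc, mul_one]
    have r : ∑ i, (μ * ((β : ℂ) * a i + (α : ℂ) * b i)) * ξ i
        = μ * ((β : ℂ) * α + (α : ℂ) * β) := by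
      have t : ∀ i : Fin d, (μ * ((β : ℂ) * a i + (α : ℂ) * b i)) * ξ i
          = μ * (β : ℂ) * ((a i : ℂ) * ξ i) + μ * (α : ℂ) * ((b i : ℂ) * ξ i) :=
        fun i => by ring
      rw [Finset.sum_congr rfl fun i _ => t i, Finset.sum_add_distrib,
        ← Finset.mul_sum, ← Finset.mul_sum, hαc, hβc]
      ring
    rw [l, r] at e
    have : (2 : ℂ) * γ = 2 * (μ * α * β) := by linear_combination e
    exact mul_left_cancel₀ two_ne_zero this
  have hwi : ∀ i, w i = μ * ((β : ℂ) * a i + (α : ℂ) * b i - (α : ℂ) * β * ξ i) := by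
    intro i
    have := hw i
    rw [hγval] at this
    linear_combination this
  have hreal : ∀ i j, (β * a i + α * b i - α * β * ξ i) * ξ j
      + (β * a j + α * b j - α * β * ξ j) * ξ i = a i * b j + a j * b i := by
    intro i j
    have hc := h i j
    rw [hwi i, hwi j] at hc
    have : μ * (((β * a i + α * b i - α * β * ξ i) * ξ j
        + (β * a j + α * b j - α * β * ξ j) * ξ i : ℝ) : ℂ)
        = μ * ((a i * b j + a j * b i : ℝ) : ℂ) := by
      push_cast
      linear_combination hc
    have := mul_left_cancel₀ hμ this
    exact_mod_cast this
  have hkey : ∀ i j, (a i - α * ξ i) * (b j - β * ξ j)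
      + (a j - α * ξ j) * (b i - β * ξ i) = 0 := by
    intro i j
    linear_combination - hreal i j
  rcases key13 _ _ hkey with hu | hv
  · have haα : ∀ i, a i = α * ξ i := fun i => by have := hu i; linarith
    have hα2 : α ^ 2 = 1 := by
      have : ∑ i, a i * a i = α ^ 2 * ∑ i, ξ i * ξ i := by
        rw [Finset.mul_sum]
        exact Finset.sum_congr rfl fun i _ => by rw [haα i]; ring
      rw [ha, hS, mul_one] at this
      exact this.symm
    have : (α - 1) * (α + 1) = 0 := by nlinarith
    rcases mul_eq_zero.mp this with h1 | h1
    · left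
      intro i
      have : α = 1 := by linarith
      rw [haα i, this, one_mul]
    · right; left
      intro i
      have : α = -1 := by linarith
      rw [haα i, this]; ring
  · have hbβ : ∀ i, b i = β * ξ i := fun i => by have := hv i; linarith
    have hβ2 : β ^ 2 = 1 := by
      have : ∑ i, b i * b i = β ^ 2 * ∑ i, ξ i * ξ i := by
        rw [Finset.mul_sum]
        exact Finset.sum_congr rfl fun i _ => by rw [hbβ i]; ring
      rw [hb, hS, mul_one] at this
      exact this.symm
    have : (β - 1) * (β + 1) = 0 := by nlinarith
    rcases mul_eq_zero.mp this with h1 | h1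
    · right; right; left
      intro i
      have : β = 1 := by linarith
      rw [hbβ i, this, one_mul]
    · right; right; right
      intro i
      have : β = -1 := by linarith
      rw [hbβ i, this]; ring

lemma sqsum13 {d : ℕ} (ξ : EuclideanSpace ℝ (Fin d)) (hξ : ‖ξ‖ = 1) :
    ∑ i, ξ i * ξ i = 1 := by
  have h := EuclideanSpace.norm_eq ξ
  rw [hξ] at h
  have h2 : ∑ i, ‖ξ i‖ ^ 2 = 1 := by
    have := Real.sqrt_eq_one.mp h.symm
    simpa using this
  rw [← h2]
  exact Finset.sum_congr rfl fun i _ => by rw [Real.norm_eq_abs, sq_abs, sq]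


/-- Rigidity for linear elasticity: the kernel of the symmetric-gradient symbol at `ξ`
is `{a ⊙ ξ}`; if a symmetric `M` is not of the form `c(a ⊙ b)`, then
`span_ℂ{M} ∩ K(ξ) = {0}` for all unit `ξ`; if `M = c(a ⊙ b)` with unit `a, b` and
`c ≠ 0`, then `span_ℂ{M} ∩ K(ξ) ≠ {0}` iff `ξ = ±a` or `ξ = ±b`. -/
theorem stmt13 {d : ℕ} (M : Matrix (Fin d) (Fin d) ℝ) (hM : M.IsSymm) :
    ((¬ ∃ (a b : Fin d → ℝ) (c : ℝ), M = c • symProd a b) →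
      ∀ ξ : EuclideanSpace ℝ (Fin d), ‖ξ‖ = 1 →
        ∀ z ∈ Submodule.span ℂ {Matrix.of fun i j => ((M i j : ℂ))},
          (∃ w : Fin d → ℂ, z = symProd w (fun i => (ξ i : ℂ))) → z = 0) ∧
    (∀ (a b : EuclideanSpace ℝ (Fin d)) (c : ℝ), ‖a‖ = 1 → ‖b‖ = 1 → c ≠ 0 →
      M = c • symProd (fun i => a i) (fun i => b i) →
      ∀ ξ : EuclideanSpace ℝ (Fin d), ‖ξ‖ = 1 →
        ((∃ z ∈ Submodule.span ℂ {Matrix.of fun i j => ((M i j : ℂ))},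
            z ≠ 0 ∧ ∃ w : Fin d → ℂ, z = symProd w (fun i => (ξ i : ℂ))) ↔
          (ξ = a ∨ ξ = -a ∨ ξ = b ∨ ξ = -b))) := by
  constructor
  · -- Part 1
    intro hne ξ hξ z hz ⟨w, hw⟩
    obtain ⟨c1, hc1⟩ := Submodule.mem_span_singleton.mp hz
    by_cases h0 : c1 = 0
    · rw [← hc1, h0, zero_smul]
    exfalso
    apply hne
    refine ⟨fun i => (c1⁻¹ * w i).re, fun i => ξ i, 1, ?_⟩
    ext i j
    have he : c1 * (M i j : ℂ) = (w i * (ξ j : ℂ) + w j * (ξ i : ℂ)) / 2 := by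
      have h' := congrFun (congrFun (hc1.trans hw) i) j
      simp only [symProd, Matrix.smul_apply, Matrix.of_apply, smul_eq_mul] at h'
      linear_combination h'
    have he3 : ((M i j : ℝ) : ℂ) * 2 = (c1⁻¹ * w i) * ξ j + (c1⁻¹ * w j) * ξ i := by
      apply mul_left_cancel₀ h0
      field_simp
      linear_combination 2 * he
    have hre : M i j * 2 = (c1⁻¹ * w i).re * ξ j + (c1⁻¹ * w j).re * ξ i := by
      have := congrArg Complex.re he3
      simpa [Complex.add_re, Complex.mul_re, Complex.ofReal_re, Complex.ofReal_im] using this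
    simp only [one_smul, symProd, Matrix.of_apply]
    linarith
  · -- Part 2
    intro a b c ha hb hc hMab ξ hξ
    have hasum := sqsum13 a ha
    have hbsum := sqsum13 b hb
    have hξsum := sqsum13 ξ hξ
    have hMentry : ∀ i j, M i j = c * ((a i * b j + b i * a j) / 2) := by
      intro i j
      rw [hMab]
      simp [symProd, Matrix.smul_apply, smul_eq_mul]
    constructor
    · rintro ⟨z, hz, hz0, w, hw⟩
      obtain ⟨c1, hc1⟩ := Submodule.mem_span_singleton.mp hz
      have h0 : c1 ≠ 0 := by
        intro h
        exact hz0 (by rw [← hc1, h, zero_smul])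
      have hμ : c1 * (c : ℂ) ≠ 0 := mul_ne_zero h0 (by exact_mod_cast hc)
      have hcore : ∀ i j, w i * (ξ j : ℂ) + w j * (ξ i : ℂ)
          = (c1 * (c : ℂ)) * ((a i : ℂ) * (b j : ℂ) + (a j : ℂ) * (b i : ℂ)) := by
        intro i j
        have he : c1 * (M i j : ℂ) = (w i * (ξ j : ℂ) + w j * (ξ i : ℂ)) / 2 := by
          have h' := congrFun (congrFun (hc1.trans hw) i) j
          simp only [symProd, Matrix.smul_apply, Matrix.of_apply, smul_eq_mul] at h'
          linear_combination h'
        rw [hMentry i j] at he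
        push_cast at he
        linear_combination -2 * he
      rcases core13 (fun i => a i) (fun i => b i) (fun i => ξ i) w (c1 * (c : ℂ)) hμ
          hasum hbsum hξsum hcore with h | h | h | h
      · exact Or.inl (PiLp.ext h)
      · refine Or.inr (Or.inl (PiLp.ext fun i => ?_))
        have := h i
        simpa using this
      · exact Or.inr (Or.inr (Or.inl (PiLp.ext h)))
      · refine Or.inr (Or.inr (Or.inr (PiLp.ext fun i => ?_)))
        have := h i
        simpa using this
    · intro hcase
      have hMne : ∃ i j, M i j ≠ 0 := by
        by_contra hcon
        push_neg at hcon
        have hab : ∀ i j, a i * b j + a j * b i = 0 := by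
          intro i j
          have h1 := hcon i j
          rw [hMentry i j] at h1
          have h2 : c * (a i * b j + a j * b i) = 0 := by linear_combination 2 * h1
          exact (mul_eq_zero.mp h2).resolve_left hc
        rcases key13 (fun i => a i) (fun i => b i) hab with h | h
        · have : (1 : ℝ) = 0 := by
            rw [← hasum]
            exact Finset.sum_eq_zero fun i _ => by rw [h i]; ring
          norm_num at this
        · have : (1 : ℝ) = 0 := by
            rw [← hbsum]
            exact Finset.sum_eq_zero fun i _ => by rw [h i]; ring
          norm_num at this
      obtain ⟨i0, j0, hij0⟩ := hMne
      refine ⟨Matrix.of fun i j => ((M i j : ℂ)), Submodule.mem_span_singleton_self _, ?_, ?_⟩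
      · intro h
        have := congrFun (congrFun h i0) j0
        simp only [Matrix.of_apply, Matrix.zero_apply, Complex.ofReal_eq_zero] at this
        exact hij0 this
      · rcases hcase with h | h | h | h
        · refine ⟨fun i => (c : ℂ) * b i, ?_⟩
          subst h
          ext i j
          simp only [symProd, Matrix.of_apply, hMentry i j]
          push_cast
          ring
        · refine ⟨fun i => -(c : ℂ) * b i, ?_⟩
          ext i j
          have hξi : ∀ k, ξ k = -(a k) := fun k => by rw [h]; simp
          simp only [symProd, Matrix.of_apply, hMentry i j, hξi i, hξi j]
          push_cast
          ring
        · refine ⟨fun i => (c : ℂ) * a i, ?_⟩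
          subst h
          ext i j
          simp only [symProd, Matrix.of_apply, hMentry i j]
          push_cast
          ring
        · refine ⟨fun i => -(c : ℂ) * a i, ?_⟩
          ext i j
          have hξi : ∀ k, ξ k = -(b k) := fun k => by rw [h]; simp
          simp only [symProd, Matrix.of_apply, hMentry i j, hξi i, hξi j]
          push_cast
          ring
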